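/- Let k ≥ 1 and d ≥ k be integers, S = {1,…,k}, and let x be uniformly distributed on the Boolean cube {−1,+1}^d. Let φ(z) = max(z,0) (ReLU), χ_S(x) = ∏_{j∈S} x_j, and for w ∈ ℝ^d define Σ(w) = E_x[φ(w·x)²] and J_S(w) = E_x[φ(w·x)·χ_S(x)]. Define the constants D_k := 2^{−k}·∑_{r=0}^{⌊(k−1)/2⌋} binom(k,r)·(k−2r)·(−1)^r and C_k := 2^{−k}·∑_{r=0}^{⌊(k−1)/2⌋} binom(k,r)·(k−2r)². Then for every α > 0 and the weight vector w with w_j = α for j ∈ S and w_j = 0 for j ∉ S, one has J_S(w) = α·D_k and Σ(w) = α²·C_k; consequently, whenever C_k ≠ 0, the ratio J_S(w)²/Σ(w) = D_k²/C_k =: R_k is independent of the scale α. -/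
import Mathlib


/-- Expectation of `f` over `x` uniform on the Boolean cube `{−1,+1}^d`. -/
noncomputable def cubeE (d : ℕ) (f : (Fin d → ℝ) → ℝ) : ℝ :=
  (∑ ε : Fin d → Bool, f fun j => if ε j then 1 else -1) / 2 ^ d

/-- Neuron self-energy Σ(w) = E_x[φ(w·x)²] with φ = ReLU. -/
noncomputable def SigmaFun (d : ℕ) (w : Fin d → ℝ) : ℝ :=
  cubeE d fun x => max (∑ j, w j * x j) 0 ^ 2

/-- Neuron–feature coupling J_A(w) = E_x[φ(w·x)·χ_A(x)] with φ = ReLU. -/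
noncomputable def Jfun (d : ℕ) (A : Finset (Fin d)) (w : Fin d → ℝ) : ℝ :=
  cubeE d fun x => max (∑ j, w j * x j) 0 * ∏ i ∈ A, x i

open Finset

section Helpers

lemma sum_bool_card {σ : Type*} [Fintype σ] [DecidableEq σ] (F : ℕ → ℝ) :
    ∑ a : σ → Bool, F #(univ.filter fun j => a j = false)
      = ∑ r ∈ range (Fintype.card σ + 1), ((Fintype.card σ).choose r : ℝ) * F r := by
  have hbij : Function.Bijective (fun s : Finset σ => fun j => decide (j ∉ s)) := by
    apply Function.bijective_iff_has_inverse.mpr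
    refine ⟨fun a => univ.filter fun j => a j = false, ?_, ?_⟩
    · intro s; ext j; simp
    · intro a; funext j
      by_cases h : a j = false
      · simp [h]
      · simp only [Bool.not_eq_false] at h; simp [h]
  rw [← Fintype.sum_bijective _ hbij (fun s => F #s)
      (fun a => F #(univ.filter fun j => a j = false)) (fun s => by
        congr 2; ext j; simp)]
  rw [← Finset.powerset_univ, Finset.sum_powerset_apply_card F]
  simp [Finset.card_univ, nsmul_eq_mul]

lemma cube_sum (k d : ℕ) (hkd : k ≤ d) (F : ℕ → ℝ) :
    ∑ ε : Fin d → Bool, F (Finset.card (univ.filter fun j : Fin d => (j : ℕ) < k ∧ ε j = false))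
      = 2 ^ (d - k) * ∑ r ∈ range (k + 1), (k.choose r : ℝ) * F r := by
  classical
  set p : Fin d → Prop := fun j => (j : ℕ) < k with hp
  have hcard : Fintype.card {j : Fin d // p j} = k := by
    have : {j : Fin d // p j} ≃ Fin k :=
      { toFun := fun j => ⟨(j : Fin d), j.2⟩
        invFun := fun i => ⟨⟨i, lt_of_lt_of_le i.2 hkd⟩, i.2⟩
        left_inv := fun j => rfl
        right_inv := fun i => rfl }
    rw [Fintype.card_congr this, Fintype.card_fin]
  rw [← Equiv.sum_comp (Equiv.piEquivPiSubtypeProd p fun _ => Bool).symm]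
  rw [Fintype.sum_prod_type]
  have hc : ∀ (a : {j // p j} → Bool) (b : {j // ¬ p j} → Bool),
      #(univ.filter fun j => p j ∧
        (Equiv.piEquivPiSubtypeProd p fun _ => Bool).symm (a, b) j = false)
      = #(univ.filter fun j : {j // p j} => a j = false) := by
    intro a b
    refine (Finset.card_bij (fun (j : {j // p j}) _ => (j : Fin d)) ?_ ?_ ?_).symm
    · intro j hj
      simp only [mem_filter, mem_univ, true_and] at hj ⊢
      refine ⟨j.2, ?_⟩
      rw [Equiv.piEquivPiSubtypeProd_symm_apply]
      simp [j.2, hj]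
    · intro j₁ _ j₂ _ h; exact Subtype.ext h
    · intro j hj
      simp only [mem_filter, mem_univ, true_and] at hj
      refine ⟨⟨j, hj.1⟩, ?_, rfl⟩
      simp only [mem_filter, mem_univ, true_and]
      have := hj.2
      rw [Equiv.piEquivPiSubtypeProd_symm_apply] at this
      simpa [hj.1] using this
  calc ∑ a : {j // p j} → Bool, ∑ b : {j // ¬ p j} → Bool,
        F #(univ.filter fun j => p j ∧
          (Equiv.piEquivPiSubtypeProd p fun _ => Bool).symm (a, b) j = false)
      = ∑ a : {j // p j} → Bool, ∑ _b : {j // ¬ p j} → Bool,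
        F #(univ.filter fun j : {j // p j} => a j = false) := by
        refine Finset.sum_congr rfl fun a _ => Finset.sum_congr rfl fun b _ => by rw [hc]
    _ = 2 ^ (d - k) * ∑ a : {j // p j} → Bool,
        F #(univ.filter fun j : {j // p j} => a j = false) := by
        rw [Finset.sum_comm, Finset.sum_const, Finset.card_univ, nsmul_eq_mul,
          Fintype.card_fun, Fintype.card_bool, Fintype.card_subtype_compl, hcard,
          Fintype.card_fin]
        push_cast
        ring
    _ = 2 ^ (d - k) * ∑ r ∈ range (k + 1), (k.choose r : ℝ) * F r := by
        rw [sum_bool_card, hcard]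

lemma card_lt_filter (k d : ℕ) (hkd : k ≤ d) :
    #(univ.filter fun j : Fin d => (j : ℕ) < k) = k := by
  rw [← Fintype.card_subtype]
  have e : {j : Fin d // (j : ℕ) < k} ≃ Fin k :=
    { toFun := fun j => ⟨(j : Fin d), j.2⟩
      invFun := fun i => ⟨⟨i, lt_of_lt_of_le i.2 hkd⟩, i.2⟩
      left_inv := fun j => rfl
      right_inv := fun i => rfl }
  rw [Fintype.card_congr e, Fintype.card_fin]

lemma dot_eq (k d : ℕ) (hkd : k ≤ d) (α : ℝ) (ε : Fin d → Bool) :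
    ∑ j : Fin d, (if (j : ℕ) < k then α else 0) * (if ε j then (1:ℝ) else -1)
      = α * ((k:ℝ) - 2 * #(univ.filter fun j : Fin d => (j : ℕ) < k ∧ ε j = false)) := by
  classical
  set S : Finset (Fin d) := univ.filter fun j : Fin d => (j : ℕ) < k with hS
  have hr : (univ.filter fun j : Fin d => (j : ℕ) < k ∧ ε j = false)
      = S.filter fun j => ε j = false := by
    rw [hS, Finset.filter_filter]
  rw [hr]
  set r := #(S.filter fun j => ε j = false) with hrdef
  have hcards : #(S.filter fun j => ε j = false) + #(S.filter fun j => ¬ (ε j = false)) = #S :=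
    Finset.card_filter_add_card_filter_not _
  have hSk : #S = k := card_lt_filter k d hkd
  have hrk : r ≤ k := by
    rw [← hSk]; exact Finset.card_le_card (Finset.filter_subset _ _)
  have step1 : ∑ j : Fin d, (if (j : ℕ) < k then α else 0) * (if ε j then (1:ℝ) else -1)
      = ∑ j ∈ S, α * (if ε j then (1:ℝ) else -1) := by
    rw [hS, Finset.sum_filter]
    exact Finset.sum_congr rfl fun j _ => by by_cases h : (j:ℕ) < k <;> simp [h]
  rw [step1, ← Finset.mul_sum]
  congr 1
  rw [← Finset.sum_filter_add_sum_filter_not S (fun j => ε j = false)]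
  have h1 : ∑ j ∈ S.filter fun j => ε j = false, (if ε j then (1:ℝ) else -1)
      = r * (-1) := by
    rw [Finset.sum_congr rfl (fun j hj => ?_), Finset.sum_const, nsmul_eq_mul]
    simp only [Finset.mem_filter] at hj
    simp [hj.2]
  have h2 : ∑ j ∈ S.filter fun j => ¬ (ε j = false), (if ε j then (1:ℝ) else -1)
      = ((k - r : ℕ) : ℝ) := by
    have hc2 : #(S.filter fun j => ¬ (ε j = false)) = k - r := by omega
    rw [Finset.sum_congr rfl (fun j hj => ?_), Finset.sum_const, hc2, nsmul_eq_mul, mul_one]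
    simp only [Finset.mem_filter, Bool.not_eq_false] at hj
    simp [hj.2]
  rw [h1, h2, Nat.cast_sub hrk]
  ring

lemma prod_eq (k d : ℕ) (ε : Fin d → Bool) :
    ∏ i ∈ (univ.filter fun j : Fin d => (j : ℕ) < k), (if ε i then (1:ℝ) else -1)
      = (-1) ^ #(univ.filter fun j : Fin d => (j : ℕ) < k ∧ ε j = false) := by
  classical
  set S : Finset (Fin d) := univ.filter fun j : Fin d => (j : ℕ) < k with hS
  have hr : (univ.filter fun j : Fin d => (j : ℕ) < k ∧ ε j = false)
      = S.filter fun j => ε j = false := by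
    rw [hS, Finset.filter_filter]
  rw [hr, ← Finset.prod_filter_mul_prod_filter_not S (fun j => ε j = false)]
  have h1 : ∏ j ∈ S.filter fun j => ε j = false, (if ε j then (1:ℝ) else -1)
      = (-1) ^ #(S.filter fun j => ε j = false) := by
    rw [Finset.prod_congr rfl (fun j hj => ?_), Finset.prod_const]
    simp only [Finset.mem_filter] at hj
    simp [hj.2]
  have h2 : ∏ j ∈ S.filter fun j => ¬ (ε j = false), (if ε j then (1:ℝ) else -1) = 1 := by
    rw [Finset.prod_congr rfl (fun j hj => ?_), Finset.prod_const, one_pow]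
    simp only [Finset.mem_filter, Bool.not_eq_false] at hj
    simp [hj.2]
  rw [h1, h2, mul_one]

lemma sum_trunc (k : ℕ) (F F' : ℕ → ℝ)
    (h0 : ∀ r ∈ range (k + 1), r ∉ range ((k - 1) / 2 + 1) → F r = 0)
    (h1 : ∀ r ∈ range ((k - 1) / 2 + 1), F r = F' r) :
    ∑ r ∈ range (k + 1), F r = ∑ r ∈ range ((k - 1) / 2 + 1), F' r := by
  rw [← Finset.sum_subset (Finset.range_subset_range.mpr (by omega)) h0]
  exact Finset.sum_congr rfl h1

lemma hpow_lemma (k d : ℕ) (hkd : k ≤ d) : ((2:ℝ) ^ (d - k)) / 2 ^ d = (2:ℝ) ^ (-(k:ℤ)) := by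
  have h : (2:ℝ) ^ d = 2 ^ (d - k) * 2 ^ k := by rw [← pow_add, Nat.sub_add_cancel hkd]
  rw [h, zpow_neg, zpow_natCast, div_mul_cancel_left₀ (by positivity)]

lemma Jval (k d : ℕ) (hk : 1 ≤ k) (hkd : k ≤ d) (α : ℝ) (hα : 0 < α) :
    Jfun d (univ.filter fun j : Fin d => (j : ℕ) < k) (fun j => if (j : ℕ) < k then α else 0)
      = α * ((2:ℝ) ^ (-(k:ℤ)) * ∑ r ∈ range ((k - 1) / 2 + 1),
          (k.choose r : ℝ) * ((k:ℝ) - 2 * r) * (-1) ^ r) := by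
  simp only [Jfun, cubeE]
  have hstep : ∀ ε : Fin d → Bool,
      max (∑ j : Fin d, (if (j : ℕ) < k then α else 0) * (if ε j then (1:ℝ) else -1)) 0 *
        ∏ i ∈ (univ.filter fun j : Fin d => (j : ℕ) < k), (if ε i then (1:ℝ) else -1)
      = (fun r : ℕ => max (α * ((k:ℝ) - 2 * r)) 0 * (-1) ^ r)
          (Finset.card (univ.filter fun j : Fin d => (j : ℕ) < k ∧ ε j = false)) := by
    intro ε
    rw [dot_eq k d hkd α ε, prod_eq k d ε]
  rw [Finset.sum_congr rfl fun ε _ => hstep ε,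
    cube_sum k d hkd (fun r : ℕ => max (α * ((k:ℝ) - 2 * r)) 0 * (-1) ^ r)]
  have htr : ∑ r ∈ range (k + 1),
      (k.choose r : ℝ) * (max (α * ((k:ℝ) - 2 * r)) 0 * (-1) ^ r)
      = α * ∑ r ∈ range ((k - 1) / 2 + 1),
          (k.choose r : ℝ) * ((k:ℝ) - 2 * r) * (-1) ^ r := by
    rw [Finset.mul_sum]
    apply sum_trunc
    · intro r hr hr'
      simp only [Finset.mem_range] at hr hr'
      have h2 : k ≤ 2 * r := by omega
      have h2' : (k:ℝ) - 2 * r ≤ 0 := by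
        have := (Nat.cast_le (α := ℝ)).mpr h2
        push_cast at this; linarith
      have : max (α * ((k:ℝ) - 2 * r)) 0 = 0 :=
        max_eq_right (mul_nonpos_of_nonneg_of_nonpos hα.le h2')
      rw [this]; ring
    · intro r hr
      simp only [Finset.mem_range] at hr
      have h2 : 2 * r < k := by omega
      have h2' : (0:ℝ) < (k:ℝ) - 2 * r := by
        have := (Nat.cast_lt (α := ℝ)).mpr h2
        push_cast at this; linarith
      have : max (α * ((k:ℝ) - 2 * r)) 0 = α * ((k:ℝ) - 2 * r) :=
        max_eq_left (by positivity)
      rw [this]; ring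
  rw [htr, (hpow_lemma k d hkd).symm]
  ring

lemma Sigval (k d : ℕ) (hk : 1 ≤ k) (hkd : k ≤ d) (α : ℝ) (hα : 0 < α) :
    SigmaFun d (fun j => if (j : ℕ) < k then α else 0)
      = α ^ 2 * ((2:ℝ) ^ (-(k:ℤ)) * ∑ r ∈ range ((k - 1) / 2 + 1),
          (k.choose r : ℝ) * ((k:ℝ) - 2 * r) ^ 2) := by
  simp only [SigmaFun, cubeE]
  have hstep : ∀ ε : Fin d → Bool,
      max (∑ j : Fin d, (if (j : ℕ) < k then α else 0) * (if ε j then (1:ℝ) else -1)) 0 ^ 2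
      = (fun r : ℕ => max (α * ((k:ℝ) - 2 * r)) 0 ^ 2)
          (Finset.card (univ.filter fun j : Fin d => (j : ℕ) < k ∧ ε j = false)) := by
    intro ε
    rw [dot_eq k d hkd α ε]
  rw [Finset.sum_congr rfl fun ε _ => hstep ε,
    cube_sum k d hkd (fun r : ℕ => max (α * ((k:ℝ) - 2 * r)) 0 ^ 2)]
  have htr : ∑ r ∈ range (k + 1),
      (k.choose r : ℝ) * (max (α * ((k:ℝ) - 2 * r)) 0 ^ 2)
      = α ^ 2 * ∑ r ∈ range ((k - 1) / 2 + 1),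
          (k.choose r : ℝ) * ((k:ℝ) - 2 * r) ^ 2 := by
    rw [Finset.mul_sum]
    apply sum_trunc
    · intro r hr hr'
      simp only [Finset.mem_range] at hr hr'
      have h2 : k ≤ 2 * r := by omega
      have h2' : (k:ℝ) - 2 * r ≤ 0 := by
        have := (Nat.cast_le (α := ℝ)).mpr h2
        push_cast at this; linarith
      have : max (α * ((k:ℝ) - 2 * r)) 0 = 0 :=
        max_eq_right (mul_nonpos_of_nonneg_of_nonpos hα.le h2')
      rw [this]; ring
    · intro r hr
      simp only [Finset.mem_range] at hr
      have h2 : 2 * r < k := by omega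
      have h2' : (0:ℝ) < (k:ℝ) - 2 * r := by
        have := (Nat.cast_lt (α := ℝ)).mpr h2
        push_cast at this; linarith
      have : max (α * ((k:ℝ) - 2 * r)) 0 = α * ((k:ℝ) - 2 * r) :=
        max_eq_left (by positivity)
      rw [this]; ring
  rw [htr, (hpow_lemma k d hkd).symm]
  ring

end Helpers

theorem stmt8 (k d : ℕ) (hk : 1 ≤ k) (hkd : k ≤ d) :
    let S : Finset (Fin d) := Finset.univ.filter fun j => (j : ℕ) < k
    let Dk : ℝ := (2 : ℝ) ^ (-(k : ℤ)) * ∑ r ∈ Finset.range ((k - 1) / 2 + 1),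
      (k.choose r : ℝ) * ((k : ℝ) - 2 * r) * (-1) ^ r
    let Ck : ℝ := (2 : ℝ) ^ (-(k : ℤ)) * ∑ r ∈ Finset.range ((k - 1) / 2 + 1),
      (k.choose r : ℝ) * ((k : ℝ) - 2 * r) ^ 2
    ∀ α : ℝ, 0 < α →
      Jfun d S (fun j => if (j : ℕ) < k then α else 0) = α * Dk ∧
      SigmaFun d (fun j => if (j : ℕ) < k then α else 0) = α ^ 2 * Ck ∧
      (Ck ≠ 0 →
        Jfun d S (fun j => if (j : ℕ) < k then α else 0) ^ 2 /
          SigmaFun d (fun j => if (j : ℕ) < k then α else 0) = Dk ^ 2 / Ck) := by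
  intro S Dk Ck α hα
  have hJ : Jfun d S (fun j => if (j : ℕ) < k then α else 0) = α * Dk :=
    Jval k d hk hkd α hα
  have hS : SigmaFun d (fun j => if (j : ℕ) < k then α else 0) = α ^ 2 * Ck :=
    Sigval k d hk hkd α hα
  refine ⟨hJ, hS, fun hCk => ?_⟩
  rw [hJ, hS, mul_pow]
  exact mul_div_mul_left _ _ (pow_ne_zero 2 hα.ne')
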